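/- Let H be a real Hilbert space and D ⊆ H a dictionary with sup_{d∈D} ‖d‖_H ≤ C_D < ∞. Then for every M > 0, every f in M times the closure of the convex hull of D ∪ (−D), and every n ≥ 1, there exist d_1, …, d_n ∈ D and real coefficients a_1, …, a_n with Σ_{i=1}^n |a_i| ≤ M such that ‖f − Σ_{i=1}^n a_i d_i‖_H ≤ C_D M n^{−1/2}. Equivalently, inf_{f_n ∈ Σ_{n,M}(D)} ‖f − f_n‖_H ≤ C_D ‖f‖_{K1(D)} n^{−1/2} with M = ‖f‖_{K1(D)}. -/

import Mathlib

open Set Pointwise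

noncomputable section

/-- `B₁(𝔻)`: the closure of the convex hull of `𝔻 ∪ (-𝔻)` in `H`. -/
def symmConvexHull {H : Type*} [NormedAddCommGroup H] [NormedSpace ℝ H]
    (D : Set H) : Set H :=
  closure (convexHull ℝ (D ∪ (-D)))

lemma mjb_avg_step {H : Type*} [NormedAddCommGroup H] [InnerProductSpace ℝ H]
    (s : Set H) (C : ℝ) (hC : ∀ x ∈ s, ‖x‖ ≤ C)
    (f : H) (hf : f ∈ convexHull ℝ s) (a : H) (c : ℝ) :
    ∃ x ∈ s, ‖a + c • (x - f)‖ ^ 2 ≤ ‖a‖ ^ 2 + c ^ 2 * (C ^ 2 - ‖f‖ ^ 2) := by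
  rw [convexHull_eq] at hf
  obtain ⟨ι, t, w, z, hw0, hw1, hz, hcm⟩ := hf
  have hfz : f = ∑ i ∈ t, w i • z i := by
    rw [← hcm, Finset.centerMass_eq_of_sum_1 t z hw1]
  -- key weighted sum identity
  have hsum : ∑ i ∈ t, w i * ‖a + c • (z i - f)‖ ^ 2
      ≤ ‖a‖ ^ 2 + c ^ 2 * (C ^ 2 - ‖f‖ ^ 2) := by
    have hexp : ∀ i ∈ t, w i * ‖a + c • (z i - f)‖ ^ 2
        = w i * ‖a‖ ^ 2 + 2 * c * (w i * (inner ℝ (a) (z i) : ℝ) - w i * (inner ℝ (a) (f) : ℝ))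
          + c ^ 2 * (w i * ‖z i‖ ^ 2 - 2 * (w i * (inner ℝ (z i) (f) : ℝ)) + w i * ‖f‖ ^ 2) := by
      intro i _
      rw [norm_add_sq_real, inner_smul_right, inner_sub_right, norm_smul,
        Real.norm_eq_abs, mul_pow, sq_abs, norm_sub_sq_real]
      ring
    rw [Finset.sum_congr rfl hexp]
    rw [Finset.sum_add_distrib, Finset.sum_add_distrib]
    have h1 : ∑ i ∈ t, w i * ‖a‖ ^ 2 = ‖a‖ ^ 2 := by
      rw [← Finset.sum_mul, hw1, one_mul]
    have h2 : ∑ i ∈ t, w i * (inner ℝ (a) (z i) : ℝ) = (inner ℝ (a) (f) : ℝ) := by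
      calc ∑ i ∈ t, w i * (inner ℝ (a) (z i) : ℝ)
          = (inner ℝ a (∑ i ∈ t, w i • z i) : ℝ) := by
            rw [inner_sum]; simp [inner_smul_right]
        _ = (inner ℝ (a) (f) : ℝ) := by rw [← hfz]
    have h3 : ∑ i ∈ t, w i * (inner ℝ (z i) (f) : ℝ) = ‖f‖ ^ 2 := by
      calc ∑ i ∈ t, w i * (inner ℝ (z i) (f) : ℝ)
          = (inner ℝ (∑ i ∈ t, w i • z i) (f) : ℝ) := by
            rw [sum_inner]; simp [real_inner_smul_left]
        _ = (inner ℝ (f) (f) : ℝ) := by rw [← hfz]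
        _ = ‖f‖ ^ 2 := real_inner_self_eq_norm_sq f
    have h4 : ∑ i ∈ t, w i * ‖z i‖ ^ 2 ≤ C ^ 2 := by
      calc ∑ i ∈ t, w i * ‖z i‖ ^ 2 ≤ ∑ i ∈ t, w i * C ^ 2 := by
            apply Finset.sum_le_sum
            intro i hi
            exact mul_le_mul_of_nonneg_left
              (by
                have := hC (z i) (hz i hi)
                have h0 : (0:ℝ) ≤ ‖z i‖ := norm_nonneg _
                nlinarith) (hw0 i hi)
        _ = C ^ 2 := by rw [← Finset.sum_mul, hw1, one_mul]
    have h5 : ∑ i ∈ t, (2 * c * (w i * (inner ℝ (a) (z i) : ℝ) - w i * (inner ℝ (a) (f) : ℝ))) = 0 := by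
      rw [← Finset.mul_sum, Finset.sum_sub_distrib, h2, ← Finset.sum_mul, hw1]
      ring
    have h6 : ∑ i ∈ t, c ^ 2 * (w i * ‖z i‖ ^ 2 - 2 * (w i * (inner ℝ (z i) (f) : ℝ)) + w i * ‖f‖ ^ 2)
        ≤ c ^ 2 * (C ^ 2 - ‖f‖ ^ 2) := by
      rw [← Finset.mul_sum]
      apply mul_le_mul_of_nonneg_left _ (sq_nonneg c)
      have h3' : ∑ x ∈ t, 2 * (w x * (inner ℝ (z x) (f) : ℝ)) = 2 * ‖f‖ ^ 2 := by
        rw [← Finset.mul_sum, h3]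
      rw [Finset.sum_add_distrib, Finset.sum_sub_distrib, h3']
      rw [show ∑ i ∈ t, w i * ‖f‖ ^ 2 = ‖f‖ ^ 2 by rw [← Finset.sum_mul, hw1, one_mul]]
      linarith [h4]
    rw [h1, h5]
    linarith [h6]
  -- extract an index with value at most the weighted average
  by_contra hcon
  push_neg at hcon
  have hlt : ∑ i ∈ t, w i * (‖a‖ ^ 2 + c ^ 2 * (C ^ 2 - ‖f‖ ^ 2))
      < ∑ i ∈ t, w i * ‖a + c • (z i - f)‖ ^ 2 := by
    apply Finset.sum_lt_sum
    · intro i hi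
      rcases eq_or_lt_of_le (hw0 i hi) with h | h
      · rw [← h]; simp
      · exact mul_le_mul_of_nonneg_left (le_of_lt (hcon (z i) (hz i hi))) (le_of_lt h)
    · have : ∃ i ∈ t, 0 < w i := by
        by_contra hno
        push_neg at hno
        have : ∑ i ∈ t, w i ≤ 0 := Finset.sum_nonpos hno
        linarith
      obtain ⟨i, hi, hwi⟩ := this
      exact ⟨i, hi, (mul_lt_mul_iff_right₀ hwi).2 (hcon (z i) (hz i hi))⟩
  rw [← Finset.sum_mul, hw1, one_mul] at hlt
  linarith [hsum]

lemma mjb_hull {H : Type*} [NormedAddCommGroup H] [InnerProductSpace ℝ H]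
    (s : Set H) (C : ℝ) (hC : ∀ x ∈ s, ‖x‖ ≤ C)
    (f : H) (hf : f ∈ convexHull ℝ s) :
    ∀ n : ℕ, 1 ≤ n → ∃ z : Fin n → H, (∀ i, z i ∈ s) ∧
      ‖f - (n : ℝ)⁻¹ • ∑ i, z i‖ ^ 2 ≤ (C ^ 2 - ‖f‖ ^ 2) / n := by
  intro n hn
  induction n, hn using Nat.le_induction with
  | base =>
    obtain ⟨x, hx, hbd⟩ := mjb_avg_step s C hC f hf 0 (-1)
    refine ⟨fun _ => x, fun _ => hx, ?_⟩
    have he : f - ((1 : ℕ) : ℝ)⁻¹ • ∑ _i : Fin 1, x = 0 + (-1 : ℝ) • (x - f) := by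
      simp
    rw [he]
    simpa using hbd
  | succ n hn ih =>
    obtain ⟨z, hz, hbd⟩ := ih
    have hn0 : (0 : ℝ) < (n : ℝ) := by exact_mod_cast hn
    have hn1 : (0 : ℝ) < (n : ℝ) + 1 := by linarith
    set g : H := (n : ℝ)⁻¹ • ∑ i, z i with hg
    set K : ℝ := C ^ 2 - ‖f‖ ^ 2 with hKdef
    have hK : 0 ≤ K := by
      by_contra h
      push_neg at h
      have : K / n < 0 := div_neg_of_neg_of_pos h hn0
      nlinarith [sq_nonneg ‖f - g‖]
    obtain ⟨x, hx, hbd2⟩ :=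
      mjb_avg_step s C hC f hf (((n : ℝ) / ((n : ℝ) + 1)) • (f - g)) (-(1 / ((n : ℝ) + 1)))
    refine ⟨Fin.snoc z x, ?_, ?_⟩
    · intro i
      refine Fin.lastCases ?_ (fun j => ?_) i
      · simpa using hx
      · simpa using hz j
    · have hsum : ∑ i : Fin (n + 1), (Fin.snoc z x : Fin (n + 1) → H) i
          = (n : ℝ) • g + x := by
        rw [Fin.sum_univ_castSucc]
        simp [hg, smul_inv_smul₀ (ne_of_gt hn0)]
      have hid : f - (((n : ℕ) + 1 : ℕ) : ℝ)⁻¹ • ∑ i : Fin (n + 1),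
            (Fin.snoc z x : Fin (n + 1) → H) i
          = ((n : ℝ) / ((n : ℝ) + 1)) • (f - g) + (-(1 / ((n : ℝ) + 1))) • (x - f) := by
        rw [hsum]
        push_cast
        match_scalars <;> field_simp <;> ring
      rw [hid]
      have ha : ‖((n : ℝ) / ((n : ℝ) + 1)) • (f - g)‖ ^ 2
          = ((n : ℝ) / ((n : ℝ) + 1)) ^ 2 * ‖f - g‖ ^ 2 := by
        rw [norm_smul, Real.norm_eq_abs, mul_pow, sq_abs]
      have hmono : ((n : ℝ) / ((n : ℝ) + 1)) ^ 2 * ‖f - g‖ ^ 2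
          ≤ ((n : ℝ) / ((n : ℝ) + 1)) ^ 2 * (K / n) :=
        mul_le_mul_of_nonneg_left hbd (by positivity)
      have heq : ((n : ℝ) / ((n : ℝ) + 1)) ^ 2 * (K / n)
          + (-(1 / ((n : ℝ) + 1))) ^ 2 * K = K / ((n : ℝ) + 1) := by
        field_simp
      have hcast : ((((n : ℕ) + 1 : ℕ) : ℝ)) = (n : ℝ) + 1 := by push_cast; ring
      rw [hcast]
      calc ‖((n : ℝ) / ((n : ℝ) + 1)) • (f - g) + (-(1 / ((n : ℝ) + 1))) • (x - f)‖ ^ 2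
          ≤ ‖((n : ℝ) / ((n : ℝ) + 1)) • (f - g)‖ ^ 2 + (-(1 / ((n : ℝ) + 1))) ^ 2 * K := hbd2
        _ ≤ ((n : ℝ) / ((n : ℝ) + 1)) ^ 2 * (K / n) + (-(1 / ((n : ℝ) + 1))) ^ 2 * K := by
            rw [ha]; linarith [hmono]
        _ = K / ((n : ℝ) + 1) := heq

lemma mjb_closure {H : Type*} [NormedAddCommGroup H] [InnerProductSpace ℝ H]
    (s : Set H) (C : ℝ) (hC : ∀ x ∈ s, ‖x‖ ≤ C)
    (f : H) (hf : f ∈ closure (convexHull ℝ s)) (hf0 : f ≠ 0)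
    (n : ℕ) (hn : 1 ≤ n) :
    ∃ z : Fin n → H, (∀ i, z i ∈ s) ∧
      ‖f - (n : ℝ)⁻¹ • ∑ i, z i‖ ≤ C / Real.sqrt n := by
  have hn0 : (0 : ℝ) < (n : ℝ) := by exact_mod_cast hn
  have hhull : ∀ h ∈ convexHull ℝ s, ‖h‖ ≤ C := by
    intro h hh
    have : convexHull ℝ s ⊆ Metric.closedBall 0 C :=
      convexHull_min (fun x hx => by simpa using hC x hx) (convex_closedBall 0 C)
    simpa using this hh
  have hFC : ‖f‖ ≤ C := by
    have hsub : closure (convexHull ℝ s) ⊆ Metric.closedBall 0 C :=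
      closure_minimal (fun x hx => by simpa using hhull x hx) Metric.isClosed_closedBall
    simpa using hsub hf
  set F : ℝ := ‖f‖ with hF
  have hF0 : 0 < F := norm_pos_iff.mpr hf0
  have hC0 : 0 < C := lt_of_lt_of_le hF0 hFC
  set φ : ℝ → ℝ := fun ε => ε + Real.sqrt ((C ^ 2 - (F - ε) ^ 2) / n) with hφdef
  have hφ0 : φ 0 < C / Real.sqrt n := by
    have harg : (C ^ 2 - (F - 0) ^ 2) / n < C ^ 2 / n :=
      (div_lt_div_iff_of_pos_right hn0).2 (by nlinarith)
    have h1 : Real.sqrt ((C ^ 2 - (F - 0) ^ 2) / n) < Real.sqrt (C ^ 2 / n) :=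
      Real.sqrt_lt_sqrt (div_nonneg (by nlinarith) hn0.le) harg
    have h2 : Real.sqrt (C ^ 2 / n) = C / Real.sqrt n := by
      rw [Real.sqrt_div (sq_nonneg C), Real.sqrt_sq hC0.le]
    simpa [hφdef, h2] using h1
  -- find a small ε > 0, ε < F, with φ ε ≤ C / √n
  have hcont : Continuous φ := by
    apply continuous_id.add
    exact Real.continuous_sqrt.comp (by continuity)
  have htend : Filter.Tendsto φ (nhdsWithin 0 (Set.Ioi 0)) (nhds (φ 0)) :=
    (hcont.tendsto 0).mono_left nhdsWithin_le_nhds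
  have hev1 : ∀ᶠ ε in nhdsWithin 0 (Set.Ioi 0), φ ε < C / Real.sqrt n :=
    htend.eventually_lt_const hφ0
  have hev2 : ∀ᶠ ε in nhdsWithin 0 (Set.Ioi 0), ε ∈ Set.Ioo (0 : ℝ) F :=
    Ioo_mem_nhdsGT_of_mem ⟨le_refl 0, hF0⟩
  obtain ⟨ε, hεlt, hε0, hεF⟩ :
      ∃ ε : ℝ, φ ε < C / Real.sqrt n ∧ 0 < ε ∧ ε < F := by
    obtain ⟨ε, h1, h2⟩ := (hev1.and hev2).exists
    exact ⟨ε, h1, h2.1, h2.2⟩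
  -- choose h in the hull close to f
  obtain ⟨h, hhmem, hdist⟩ := Metric.mem_closure_iff.1 hf ε hε0
  obtain ⟨z, hz, hbd⟩ := mjb_hull s C hC h hhmem n hn
  refine ⟨z, hz, ?_⟩
  set av : H := (n : ℝ)⁻¹ • ∑ i, z i with hav
  have hfh : ‖f - h‖ < ε := by rwa [← dist_eq_norm]
  have hhF : F - ε ≤ ‖h‖ := by
    have := norm_sub_norm_le f h
    rw [hF]; linarith
  have hFε : 0 ≤ F - ε := by linarith
  have hnum : C ^ 2 - ‖h‖ ^ 2 ≤ C ^ 2 - (F - ε) ^ 2 := by nlinarith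
  have hb1 : ‖h - av‖ ≤ Real.sqrt ((C ^ 2 - (F - ε) ^ 2) / n) := by
    have h1 : ‖h - av‖ ^ 2 ≤ (C ^ 2 - (F - ε) ^ 2) / n :=
      le_trans hbd ((div_le_div_iff_of_pos_right hn0).2 hnum)
    have := Real.sqrt_le_sqrt h1
    rwa [Real.sqrt_sq (norm_nonneg _)] at this
  calc ‖f - av‖ = ‖(f - h) + (h - av)‖ := by abel_nf
    _ ≤ ‖f - h‖ + ‖h - av‖ := norm_add_le _ _
    _ ≤ ε + Real.sqrt ((C ^ 2 - (F - ε) ^ 2) / n) := by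
        exact add_le_add hfh.le hb1
    _ = φ ε := rfl
    _ ≤ C / Real.sqrt n := hεlt.le

/-- **Maurey–Jones–Barron `n^{-1/2}` approximation rate.**
Let `H` be a real Hilbert space and `𝔻 ⊆ H` a dictionary with `sup_{d∈𝔻} ‖d‖ ≤ C_𝔻 < ∞`.
Then for every `M > 0`, every `f` in `M` times the closure of the convex hull of
`𝔻 ∪ (−𝔻)`, and every `n ≥ 1`, there exist `d_1, …, d_n ∈ 𝔻` and coefficients
`a_1, …, a_n` with `∑ |a_i| ≤ M` such that `‖f − ∑ a_i d_i‖ ≤ C_𝔻 M n^{−1/2}`. -/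
theorem maurey_jones_barron
    {H : Type*} [NormedAddCommGroup H] [InnerProductSpace ℝ H] [CompleteSpace H]
    (D : Set H) (CD : ℝ) (hCD : ∀ d ∈ D, ‖d‖ ≤ CD)
    (M : ℝ) (hM : 0 < M) (f : H) (hf : f ∈ M • symmConvexHull D)
    (n : ℕ) (hn : 1 ≤ n) :
    ∃ (a : Fin n → ℝ) (g : Fin n → H),
      (∀ i, g i ∈ D) ∧ (∑ i, |a i|) ≤ M ∧
      ‖f - ∑ i, a i • g i‖ ≤ CD * M / Real.sqrt n := by
  have hn0 : (0 : ℝ) < (n : ℝ) := by exact_mod_cast hn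
  obtain ⟨f', hf', rfl⟩ := Set.mem_smul_set.1 hf
  set s : Set H := D ∪ (-D) with hs
  have hCs : ∀ x ∈ s, ‖x‖ ≤ CD := by
    intro x hx
    rcases hx with hx | hx
    · exact hCD x hx
    · rw [Set.mem_neg] at hx
      simpa using hCD (-x) hx
  -- D is nonempty
  have hDne : D.Nonempty := by
    have hne : (convexHull ℝ s).Nonempty := by
      by_contra hempty
      rw [Set.not_nonempty_iff_eq_empty] at hempty
      rw [symmConvexHull, ← hs, hempty, closure_empty] at hf'
      exact hf'
    obtain ⟨x, hx | hx⟩ := convexHull_nonempty_iff.1 hne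
    · exact ⟨x, hx⟩
    · exact ⟨-x, Set.mem_neg.1 hx⟩
  have hCD0 : 0 ≤ CD := le_trans (norm_nonneg _) (hCD _ hDne.choose_spec)
  by_cases hf0 : f' = 0
  · refine ⟨fun _ => 0, fun _ => hDne.choose, fun _ => hDne.choose_spec, ?_, ?_⟩
    · simp [hM.le]
    · simp [hf0]
      positivity
  · obtain ⟨z, hz, hbd⟩ := mjb_closure s CD hCs f' hf' hf0 n hn
    -- decompose each z i as a sign times a dictionary element
    have hch : ∀ i, ∃ (e : ℝ) (d : H), d ∈ D ∧ |e| = 1 ∧ z i = e • d := by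
      intro i
      rcases hz i with hzi | hzi
      · exact ⟨1, z i, hzi, by norm_num, by simp⟩
      · exact ⟨-1, -(z i), Set.mem_neg.1 hzi, by norm_num, by simp⟩
    choose e d hd he hzd using hch
    refine ⟨fun i => M / n * e i, d, hd, ?_, ?_⟩
    · have : ∀ i, |M / n * e i| = M / n := by
        intro i
        rw [abs_mul, he, abs_of_pos (by positivity), mul_one]
      rw [Finset.sum_congr rfl (fun i _ => this i)]
      rw [Finset.sum_const, Finset.card_univ, Fintype.card_fin, nsmul_eq_mul]
      exact le_of_eq (by field_simp)
    · have hsum : ∑ i, (M / n * e i) • d i = M • ((n : ℝ)⁻¹ • ∑ i, z i) := by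
        rw [Finset.smul_sum, Finset.smul_sum]
        apply Finset.sum_congr rfl
        intro i _
        rw [hzd i, smul_smul, smul_smul, div_eq_mul_inv]
      rw [hsum, ← smul_sub, norm_smul, Real.norm_eq_abs, abs_of_pos hM]
      calc M * ‖f' - (n : ℝ)⁻¹ • ∑ i, z i‖ ≤ M * (CD / Real.sqrt n) :=
            mul_le_mul_of_nonneg_left hbd hM.le
        _ = CD * M / Real.sqrt n := by ring
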